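/- (Optimal covariant discrimination) Consider the family of pure states $|\psi_y\rangle = \sum_{z \in \mathbb{F}_2^l} (-1)^{z \cdot y}\sqrt{P(z)}\,|z\rangle$ for $y \in \mathbb{F}_2^l$ with equal prior probabilities $2^{-l}$, where $P$ is a probability distribution on $\mathbb{F}_2^l$. The maximal probability of correctly identifying $y$ over all POVMs equals $\left(\sum_{z} \sqrt{P(z)}\sqrt{2^{-l}}\right)^2$. -/

import Mathlib

open Matrix
open scoped ComplexOrder

section Helpers

lemma zmod2_pow_add' (a b : ZMod 2) :
    (-1 : ℂ) ^ ((a + b).val) = (-1 : ℂ) ^ a.val * (-1 : ℂ) ^ b.val := by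
  rcases (show ∀ x : ZMod 2, x = 0 ∨ x = 1 by decide) a with rfl | rfl <;>
    rcases (show ∀ x : ZMod 2, x = 0 ∨ x = 1 by decide) b with rfl | rfl <;>
    norm_num [show ((1:ZMod 2) + 1) = 0 from rfl, show ((2:ZMod 2)).val = 0 from rfl, show ((1:ZMod 2)).val = 1 from rfl,
      show ((0:ZMod 2)).val = 0 from rfl]

lemma char_sum' {l : ℕ} {w : Fin l → ZMod 2} (hw : w ≠ 0) :
    ∑ y : Fin l → ZMod 2, (-1 : ℂ) ^ ((w ⬝ᵥ y : ZMod 2)).val = 0 := by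
  obtain ⟨i, hi⟩ := Function.ne_iff.mp hw
  simp only [Pi.zero_apply] at hi
  have hwi : w i = 1 := by
    have : ∀ x : ZMod 2, x ≠ 0 → x = 1 := by decide
    exact this _ hi
  set c : Fin l → ZMod 2 := Pi.single i 1 with hc
  have h1 : ∀ y, w ⬝ᵥ (y + c) = w ⬝ᵥ y + 1 := by
    intro y
    rw [dotProduct_add, hc, dotProduct_single, hwi, one_mul]
  have h2 : (∑ y : Fin l → ZMod 2, (-1 : ℂ) ^ ((w ⬝ᵥ y : ZMod 2)).val)
      = ∑ y : Fin l → ZMod 2, (-1 : ℂ) ^ ((w ⬝ᵥ (y + c) : ZMod 2)).val :=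
    (Fintype.sum_equiv (Equiv.addRight c) _ _ (fun y => rfl)).symm
  have h3 : ∀ y : Fin l → ZMod 2, (-1 : ℂ) ^ ((w ⬝ᵥ (y + c) : ZMod 2)).val
      = -((-1 : ℂ) ^ ((w ⬝ᵥ y : ZMod 2)).val) := by
    intro y
    rw [h1, zmod2_pow_add']
    norm_num [show ((1:ZMod 2)).val = 1 from rfl]
  simp_rw [h3, Finset.sum_neg_distrib] at h2
  linear_combination h2 / 2

lemma psd_diag' {n : Type*} [Fintype n] [DecidableEq n]
    {M : Matrix n n ℂ} (h : M.PosSemidef) (k : n) :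
    0 ≤ (M k k).re ∧ (M k k).im = 0 := by
  have h0 := h.dotProduct_mulVec_nonneg (Pi.single k 1)
  have : star (Pi.single k (1:ℂ)) ⬝ᵥ M.mulVec (Pi.single k 1) = M k k := by
    simp [mulVec_single, ← Pi.single_star, single_dotProduct]
  rw [this, Complex.le_def] at h0
  simp at h0
  exact ⟨h0.1, h0.2.symm⟩

lemma psd_entry_bound' {n : Type*} [Fintype n] [DecidableEq n]
    {M : Matrix n n ℂ} (h : M.PosSemidef) (i j : n) :
    ‖M i j‖ ≤ Real.sqrt (M i i).re * Real.sqrt (M j j).re := by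
  have hA := (psd_diag' h i).1
  have hB := (psd_diag' h j).1
  have hii : M i i = ((M i i).re : ℂ) := Complex.ext rfl ((psd_diag' h i).2)
  have hjj : M j j = ((M j j).re : ℂ) := Complex.ext rfl ((psd_diag' h j).2)
  by_cases hij : i = j
  · subst hij
    have : ‖M i i‖ = (M i i).re := by
      rw [hii]; simp [abs_of_nonneg hA]
    rw [this, Real.mul_self_sqrt hA]
  · set A := (M i i).re with hAdef
    set B := (M j j).re with hBdef
    set C := ‖M i j‖ with hCdef
    have hC : 0 ≤ C := norm_nonneg _
    have hji : M j i = (starRingEnd ℂ) (M i j) := by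
      have h1 := h.1
      rw [Matrix.IsHermitian] at h1
      have h2 := congrFun (congrFun h1 j) i
      simpa [Matrix.conjTranspose_apply] using h2.symm
    set z := M i j with hzdef
    set b : ℂ := -((starRingEnd ℂ) z) with hbdef
    have hzz : z * (starRingEnd ℂ) z = (C : ℂ) ^ 2 := by
      rw [Complex.mul_conj]
      norm_cast
      rw [hCdef, Complex.sq_norm]
    have key : ∀ t : ℝ, 0 ≤ A * (t * t) + (-2 * C ^ 2) * t + C ^ 2 * B := by
      intro t
      have h0 := h.dotProduct_mulVec_nonneg (Pi.single i (t:ℂ) + Pi.single j b)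
      have he : star (Pi.single i ((t:ℝ):ℂ) + Pi.single j b) ⬝ᵥ
          M.mulVec (Pi.single i ((t:ℝ):ℂ) + Pi.single j b)
          = ((A * (t * t) + (-2 * C ^ 2) * t + C ^ 2 * B : ℝ) : ℂ) := by
        simp only [star_add, ← Pi.single_star, add_dotProduct, mulVec_add, mulVec_single,
          single_dotProduct, dotProduct_add, Pi.add_apply, Pi.smul_apply, op_smul_eq_mul,
          Matrix.col_apply]
        rw [hii, hjj, hji, ← hzdef]
        push_cast
        rw [hbdef]
        simp only [Complex.star_def, Complex.conj_ofReal, map_neg, Complex.conj_conj]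
        linear_combination ((B:ℂ) - 2 * (t:ℂ)) * hzz
      rw [he] at h0
      exact_mod_cast h0
    have hd := discrim_le_zero key
    rw [discrim] at hd
    rw [← Real.sqrt_mul hA, show C = Real.sqrt (C^2) from (Real.sqrt_sq hC).symm]
    apply Real.sqrt_le_sqrt
    nlinarith [sq_nonneg C, mul_nonneg hA hB]

lemma outer_quad' {n : Type*} [Fintype n] (u x : n → ℂ) :
    star x ⬝ᵥ (vecMulVec u (star u)).mulVec x
      = star (star u ⬝ᵥ x) * (star u ⬝ᵥ x) := by
  have hmv : (vecMulVec u (star u)).mulVec x = fun z => u z * (star u ⬝ᵥ x) := by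
    funext z
    simp [mulVec, vecMulVec_apply, dotProduct, Finset.mul_sum, mul_assoc]
  rw [hmv]
  simp only [dotProduct, Pi.star_apply, star_sum, star_mul', star_star]
  rw [Finset.sum_mul]
  exact Finset.sum_congr rfl fun z _ => by ring

lemma neg_one_pow_sq' (k : ℕ) : ((-1:ℂ) ^ k) * ((-1:ℂ) ^ k) = 1 := by
  rw [← pow_add, ← two_mul, pow_mul]
  norm_num

end Helpers

/-- The pure state `|ψ_y⟩ = ∑ z (-1)^{z·y} √(P z) |z⟩`. -/
noncomputable def psiKet (l : ℕ) (P : (Fin l → ZMod 2) → ℝ)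
    (y : Fin l → ZMod 2) : (Fin l → ZMod 2) → ℂ :=
  fun z => (-1 : ℂ) ^ ((z ⬝ᵥ y : ZMod 2)).val * (Real.sqrt (P z) : ℝ)

/-- The success probability `2^{-l} ∑_y ⟨ψ_y| M_y |ψ_y⟩` of the POVM `M`. -/
noncomputable def succProb (l : ℕ) (P : (Fin l → ZMod 2) → ℝ)
    (M : (Fin l → ZMod 2) → Matrix (Fin l → ZMod 2) (Fin l → ZMod 2) ℂ) : ℝ :=
  ((2 : ℝ) ^ l)⁻¹ *
    ∑ y, ((star (psiKet l P y)) ⬝ᵥ ((M y).mulVec (psiKet l P y))).re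

/-- The Fourier measurement vectors `|φ_y⟩ = ∑ z (-1)^{z·y} √(2^{-l}) |z⟩`. -/
noncomputable def phiKet (l : ℕ) (y : Fin l → ZMod 2) : (Fin l → ZMod 2) → ℂ :=
  fun z => (-1 : ℂ) ^ ((z ⬝ᵥ y : ZMod 2)).val * (Real.sqrt (((2:ℝ)^l)⁻¹) : ℝ)

/-- The optimal (square-root) measurement `M_y = |φ_y⟩⟨φ_y|`. -/
noncomputable def optM (l : ℕ) (y : Fin l → ZMod 2) :
    Matrix (Fin l → ZMod 2) (Fin l → ZMod 2) ℂ :=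
  vecMulVec (phiKet l y) (star (phiKet l y))

lemma optM_posSemidef (l : ℕ) (y : Fin l → ZMod 2) : (optM l y).PosSemidef := by
  refine PosSemidef.of_dotProduct_mulVec_nonneg ?_ ?_
  · ext z z'
    simp [optM, vecMulVec_apply, Matrix.conjTranspose_apply, mul_comm]
  · intro x
    rw [optM, outer_quad']
    exact star_mul_self_nonneg _

lemma optM_sum (l : ℕ) : ∑ y, optM l y = 1 := by
  have hN : (0:ℝ) ≤ ((2:ℝ)^l)⁻¹ := by positivity
  have hr : ((Real.sqrt (((2:ℝ)^l)⁻¹) : ℝ) : ℂ) * ((Real.sqrt (((2:ℝ)^l)⁻¹) : ℝ) : ℂ)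
      = ((((2:ℝ)^l)⁻¹ : ℝ) : ℂ) := by
    rw [← Complex.ofReal_mul, Real.mul_self_sqrt hN]
  ext z z'
  rw [Matrix.sum_apply]
  have hterm : ∀ y, optM l y z z'
      = ((-1:ℂ) ^ ((((z + z') ⬝ᵥ y : ZMod 2)).val)) * ((((2:ℝ)^l)⁻¹ : ℝ) : ℂ) := by
    intro y
    simp only [optM, vecMulVec_apply, phiKet, Pi.star_apply, star_mul',
      Complex.star_def, Complex.conj_ofReal, map_pow, map_neg, _root_.map_one]
    rw [add_dotProduct, zmod2_pow_add']
    linear_combination ((-1:ℂ) ^ ((z ⬝ᵥ y : ZMod 2)).val * (-1:ℂ) ^ ((z' ⬝ᵥ y : ZMod 2)).val) * hr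
  simp_rw [hterm]
  rw [← Finset.sum_mul]
  by_cases hzz : z = z'
  · subst hzz
    have hz0 : z + z = 0 := by
      funext i
      have : ∀ a : ZMod 2, a + a = 0 := by decide
      exact this (z i)
    rw [hz0, Matrix.one_apply_eq]
    simp only [zero_dotProduct, ZMod.val_zero, pow_zero]
    rw [Finset.sum_const]
    have hcard : Fintype.card (Fin l → ZMod 2) = 2 ^ l := by
      simp [Fintype.card_fun]
    simp only [Finset.card_univ, hcard, nsmul_eq_mul, mul_one]
    push_cast
    rw [mul_inv_cancel₀]
    positivity
  · have hw : z + z' ≠ 0 := by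
      intro h
      apply hzz
      funext i
      have : ∀ a b : ZMod 2, a + b = 0 → a = b := by decide
      exact this _ _ (congrFun h i)
    rw [char_sum' hw, zero_mul, Matrix.one_apply_ne hzz]

lemma optM_succProb (l : ℕ) (P : (Fin l → ZMod 2) → ℝ) (hP0 : ∀ z, 0 ≤ P z) :
    succProb l P (optM l) = (∑ z, Real.sqrt (P z) * Real.sqrt (((2 : ℝ) ^ l)⁻¹)) ^ 2 := by
  have hval : ∀ y : Fin l → ZMod 2,
      ((star (psiKet l P y)) ⬝ᵥ ((optM l y).mulVec (psiKet l P y))).re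
        = (∑ z, Real.sqrt (P z) * Real.sqrt (((2 : ℝ) ^ l)⁻¹)) ^ 2 := by
    intro y
    rw [optM, outer_quad']
    have hc : star (phiKet l y) ⬝ᵥ psiKet l P y
        = ((∑ z, Real.sqrt (P z) * Real.sqrt (((2 : ℝ) ^ l)⁻¹) : ℝ) : ℂ) := by
      rw [dotProduct]
      push_cast
      refine Finset.sum_congr rfl fun z _ => ?_
      simp only [Pi.star_apply, phiKet, psiKet, Complex.star_def, star_mul',
        Complex.conj_ofReal, map_pow, map_neg, _root_.map_one]
      have := neg_one_pow_sq' ((z ⬝ᵥ y : ZMod 2)).val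
      linear_combination ((Real.sqrt (((2:ℝ)^l)⁻¹) : ℂ) * (Real.sqrt (P z) : ℂ)) * this
    rw [hc]
    rw [Complex.star_def, Complex.conj_ofReal, ← Complex.ofReal_mul]
    rw [Complex.ofReal_re, ← sq]
  rw [succProb]
  simp_rw [hval]
  rw [Finset.sum_const]
  have hcard : Fintype.card (Fin l → ZMod 2) = 2 ^ l := by
    simp [Fintype.card_fun]
  simp only [Finset.card_univ, hcard, nsmul_eq_mul]
  push_cast
  rw [← mul_assoc, inv_mul_cancel₀ (by positivity), one_mul]

/-- Optimal covariant discrimination: the maximal probability of correctly identifying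
`y` among the equiprobable states `|ψ_y⟩`, over all POVMs, equals
`(∑ z √(P z) √(2^{-l}))²`. -/
theorem optimal_covariant_discrimination (l : ℕ) (P : (Fin l → ZMod 2) → ℝ)
    (hP0 : ∀ z, 0 ≤ P z) (hP1 : ∑ z, P z = 1) :
    IsGreatest
      {s : ℝ | ∃ M : (Fin l → ZMod 2) →
          Matrix (Fin l → ZMod 2) (Fin l → ZMod 2) ℂ,
        (∀ y, (M y).PosSemidef) ∧ (∑ y, M y = 1) ∧ s = succProb l P M}
      ((∑ z, Real.sqrt (P z) * Real.sqrt (((2 : ℝ) ^ l)⁻¹)) ^ 2) := by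
  constructor
  · exact ⟨optM l, optM_posSemidef l, optM_sum l, (optM_succProb l P hP0).symm⟩
  · rintro s ⟨M, hpsd, hsum, rfl⟩
    set r : (Fin l → ZMod 2) → ℝ := fun z => Real.sqrt (P z) with hrdef
    have hr0 : ∀ z, 0 ≤ r z := fun z => Real.sqrt_nonneg _
    set d : (Fin l → ZMod 2) → (Fin l → ZMod 2) → ℝ := fun y z => ((M y) z z).re with hddef
    have hd0 : ∀ y z, 0 ≤ d y z := fun y z => (psd_diag' (hpsd y) z).1
    -- step 1: per-y bound
    have step1 : ∀ y : Fin l → ZMod 2,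
        ((star (psiKet l P y)) ⬝ᵥ ((M y).mulVec (psiKet l P y))).re
          ≤ (∑ z, r z * Real.sqrt (d y z)) ^ 2 := by
      intro y
      have habs : ∀ z, ‖psiKet l P y z‖ = r z := by
        intro z
        simp [psiKet, hrdef, abs_of_nonneg (Real.sqrt_nonneg (P z))]
      have hexp : ((star (psiKet l P y)) ⬝ᵥ ((M y).mulVec (psiKet l P y))).re
          = ∑ z, ∑ z', ((starRingEnd ℂ) (psiKet l P y z) * ((M y) z z' * psiKet l P y z')).re := by
        simp only [dotProduct, mulVec, Pi.star_apply, Complex.star_def]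
        rw [Complex.re_sum]
        refine Finset.sum_congr rfl fun z _ => ?_
        rw [Finset.mul_sum, Complex.re_sum]
      rw [hexp]
      calc ∑ z, ∑ z', ((starRingEnd ℂ) (psiKet l P y z) * ((M y) z z' * psiKet l P y z')).re
          ≤ ∑ z, ∑ z', (r z * Real.sqrt (d y z)) * (r z' * Real.sqrt (d y z')) := by
            refine Finset.sum_le_sum fun z _ => Finset.sum_le_sum fun z' _ => ?_
            refine (Complex.re_le_norm _).trans ?_
            rw [norm_mul, norm_mul, Complex.norm_conj, habs, habs]
            have hb := psd_entry_bound' (hpsd y) z z'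
            calc r z * (‖(M y) z z'‖ * r z')
                ≤ r z * ((Real.sqrt (d y z) * Real.sqrt (d y z')) * r z') := by
                  gcongr
              _ = (r z * Real.sqrt (d y z)) * (r z' * Real.sqrt (d y z')) := by ring
        _ = (∑ z, r z * Real.sqrt (d y z)) ^ 2 := by
            rw [sq, Finset.sum_mul_sum]
    -- step 2: Cauchy–Schwarz per y
    have step2 : ∀ y : Fin l → ZMod 2,
        (∑ z, r z * Real.sqrt (d y z)) ^ 2 ≤ (∑ z, r z) * (∑ z, r z * d y z) := by
      intro y
      refine Finset.sum_sq_le_sum_mul_sum_of_sq_eq_mul _ (fun z _ => hr0 z)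
        (fun z _ => mul_nonneg (hr0 z) (hd0 y z)) (fun z _ => ?_)
      rw [mul_pow, Real.sq_sqrt (hd0 y z), sq]
      ring
    -- step 3: column sums of the POVM
    have step3 : ∀ z, ∑ y, d y z = 1 := by
      intro z
      have := congrFun (congrFun hsum z) z
      rw [Matrix.sum_apply] at this
      have hre := congrArg Complex.re this
      rw [Complex.re_sum] at hre
      rw [hddef]
      simpa [Matrix.one_apply_eq] using hre
    have hfinal : ∑ y, ((star (psiKet l P y)) ⬝ᵥ ((M y).mulVec (psiKet l P y))).re
        ≤ (∑ z, r z) ^ 2 := by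
      calc ∑ y, ((star (psiKet l P y)) ⬝ᵥ ((M y).mulVec (psiKet l P y))).re
          ≤ ∑ y, (∑ z, r z) * (∑ z, r z * d y z) :=
            Finset.sum_le_sum fun y _ => (step1 y).trans (step2 y)
        _ = (∑ z, r z) * ∑ z, r z * (∑ y, d y z) := by
            rw [← Finset.mul_sum, Finset.sum_comm]
            congr 1
            refine Finset.sum_congr rfl fun z _ => ?_
            rw [Finset.mul_sum]
        _ = (∑ z, r z) ^ 2 := by
            simp_rw [step3]
            rw [sq]
            simp
    rw [succProb]
    have hNpos : (0:ℝ) < (2:ℝ) ^ l := by positivity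
    have htarget : (∑ z, Real.sqrt (P z) * Real.sqrt (((2 : ℝ) ^ l)⁻¹)) ^ 2
        = ((2 : ℝ) ^ l)⁻¹ * (∑ z, r z) ^ 2 := by
      rw [← Finset.sum_mul, mul_pow, Real.sq_sqrt (le_of_lt (inv_pos.mpr hNpos))]
      ring
    rw [htarget]
    exact mul_le_mul_of_nonneg_left hfinal (by positivity)
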